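/- For n ≥ 2, the number of Dyck paths of semi-length n with (sum of peak heights) − (number of peaks) = 2 equals the number of fully commutative elements of Coxeter length 2 in S_n, and for n = 4 (semi-length 4) this number T(4,2) equals 5. -/
import Mathlib


attribute [local instance] Classical.propDecidable

/-- The set of Dyck paths of semi-length `n`, encoded as the set `U ⊆ {0, …, 2n-1}` of
positions of up-steps, such that there are `n` up-steps and every prefix has at least
as many up-steps as down-steps. -/
noncomputable def dyckPaths (n : ℕ) : Finset (Finset ℕ) :=
  (Finset.range (2 * n)).powerset.filter
    (fun U => U.card = n ∧ ∀ t ∈ Finset.range (2 * n + 1), t ≤ 2 * (U ∩ Finset.range t).card)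

/-- The set of positions `i` at which the Dyck path (with up-step set `U`) has a peak:
an up-step at `i` immediately followed by a down-step at `i+1`. -/
def peakSet (n : ℕ) (U : Finset ℕ) : Finset ℕ :=
  (Finset.range (2 * n)).filter (fun i => i ∈ U ∧ i + 1 ∉ U ∧ i + 1 < 2 * n)

/-- The height of the peak at position `i`: the y-coordinate after the up-step at `i`. -/
def peakHeight (U : Finset ℕ) (i : ℕ) : ℕ :=
  2 * (U ∩ Finset.range (i + 1)).card - (i + 1)

/-- The statistic (sum of peak heights) − (number of peaks) of a Dyck path. -/
def statDiff (n : ℕ) (U : Finset ℕ) : ℕ :=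
  (∑ i ∈ peakSet n U, peakHeight U i) - (peakSet n U).card

/-- `T n k` is the number of Dyck paths of semi-length `n` with
(sum of peak heights) − (number of peaks) equal to `k`. -/
noncomputable def T (n k : ℕ) : ℕ :=
  ((dyckPaths n).filter (fun U => statDiff n U = k)).card


/-- The `i`-th simple transposition in the symmetric group `S_n` on `{0, …, n-1}`,
for `1 ≤ i ≤ n - 1` (and the identity otherwise). -/
def sgen (n : ℕ) (i : ℕ) : Equiv.Perm (Fin n) :=
  if h : 0 < i ∧ i < n then Equiv.swap ⟨i - 1, by omega⟩ ⟨i, by omega⟩ else 1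

/-- The product of the word `l` of simple transpositions in `S_n`. -/
def wprod (n : ℕ) (l : List ℕ) : Equiv.Perm (Fin n) :=
  (l.map (sgen n)).prod

/-- `l` is a reduced word for `w ∈ S_n`. -/
def IsReducedWord (n : ℕ) (w : Equiv.Perm (Fin n)) (l : List ℕ) : Prop :=
  (∀ i ∈ l, 1 ≤ i ∧ i + 1 ≤ n) ∧ wprod n l = w ∧
    ∀ l' : List ℕ, (∀ i ∈ l', 1 ≤ i ∧ i + 1 ≤ n) → wprod n l' = w → l.length ≤ l'.length

/-- `w ∈ S_n` is fully commutative: no reduced word for `w` contains a factor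
`[i, i', i]` with `|i - i'| = 1`. -/
def FullyCommutative (n : ℕ) (w : Equiv.Perm (Fin n)) : Prop :=
  ∀ l : List ℕ, IsReducedWord n w l →
    ∀ i i' : ℕ, (i + 1 = i' ∨ i' + 1 = i) → ¬ ([i, i', i] <:+: l)

/-! ### auxiliary -/

/-- valid height-offset sequences -/
structure GoodE (n : ℕ) (e : ℕ → ℕ) : Prop where
  zero : e 0 = 0
  step : ∀ k, e (k + 1) ≤ e k + 1
  vanish : ∀ k, n ≤ k → e k = 0

def uF (e : ℕ → ℕ) (k : ℕ) : ℕ := 2 * k - e k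

def mkU (n : ℕ) (e : ℕ → ℕ) : Finset ℕ := (Finset.range n).image (uF e)

def descSum (n : ℕ) (e : ℕ → ℕ) : ℕ :=
  ∑ k ∈ (Finset.range n).filter (fun k => e (k + 1) ≤ e k), e k

namespace GoodE

variable {n : ℕ} {e : ℕ → ℕ}

lemma e_le (h : GoodE n e) : ∀ k, e k ≤ k := by
  intro k
  induction k with
  | zero => exact h.zero.le
  | succ k ih => have := h.step k; omega

lemma uF_step (h : GoodE n e) : ∀ k, uF e k + 1 ≤ uF e (k + 1) := by
  intro k
  have h1 := h.e_le k
  have h2 := h.e_le (k + 1)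
  have h3 := h.step k
  simp only [uF]; omega

lemma uF_mono (h : GoodE n e) : StrictMono (uF e) :=
  strictMono_nat_of_lt_succ (fun k => by have := h.uF_step k; omega)

lemma uF_le (h : GoodE n e) (k : ℕ) : uF e k ≤ 2 * k := by simp only [uF]; omega

lemma uF_ge (h : GoodE n e) (k : ℕ) : k ≤ uF e k := by have := h.e_le k; simp only [uF]; omega

lemma uF_add (h : GoodE n e) (j k : ℕ) (hjk : j ≤ k) : uF e j + (k - j) ≤ uF e k := by
  have := h.uF_mono.le_iff_le.mpr hjk
  have h1 := h.e_le j
  have h2 := h.e_le k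
  -- uF e k - uF e j ≥ k - j since uF grows by ≥ 1 each step
  have : ∀ m, uF e j + m ≤ uF e (j + m) := by
    intro m
    induction m with
    | zero => simp
    | succ m ih =>
        show uF e j + (m + 1) ≤ uF e (j + m + 1)
        have := h.uF_step (j + m)
        omega
  have := this (k - j)
  have : uF e (j + (k - j)) = uF e k := by congr 1; omega
  omega

end GoodE

lemma mem_mkU {n : ℕ} {e : ℕ → ℕ} {x : ℕ} :
    x ∈ mkU n e ↔ ∃ k, k < n ∧ uF e k = x := by
  simp [mkU, Finset.mem_image, Finset.mem_range]

lemma card_mkU {n : ℕ} {e : ℕ → ℕ} (h : GoodE n e) : (mkU n e).card = n := by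
  rw [mkU, Finset.card_image_of_injOn (h.uF_mono.injective.injOn),
    Finset.card_range]

lemma mkU_inter_range {n : ℕ} {e : ℕ → ℕ} (h : GoodE n e) (t : ℕ) :
    mkU n e ∩ Finset.range t = ((Finset.range n).filter (fun k => uF e k < t)).image (uF e) := by
  ext x
  simp only [Finset.mem_inter, mem_mkU, Finset.mem_range, Finset.mem_image, Finset.mem_filter]
  constructor
  · rintro ⟨⟨k, hk, rfl⟩, hx⟩; exact ⟨k, ⟨hk, hx⟩, rfl⟩
  · rintro ⟨k, ⟨hk, hx⟩, rfl⟩; exact ⟨⟨k, hk, rfl⟩, hx⟩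

lemma card_mkU_inter_range {n : ℕ} {e : ℕ → ℕ} (h : GoodE n e) (t : ℕ) :
    (mkU n e ∩ Finset.range t).card = ((Finset.range n).filter (fun k => uF e k < t)).card := by
  rw [mkU_inter_range h, Finset.card_image_of_injOn (h.uF_mono.injective.injOn)]

lemma mkU_mem_dyckPaths {n : ℕ} {e : ℕ → ℕ} (h : GoodE n e) : mkU n e ∈ dyckPaths n := by
  simp only [dyckPaths, Finset.mem_filter, Finset.mem_powerset]
  refine ⟨?_, card_mkU h, ?_⟩
  · intro x hx
    rw [mem_mkU] at hx
    obtain ⟨k, hk, rfl⟩ := hx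
    have := h.uF_le k
    rw [Finset.mem_range]; omega
  · intro t ht
    rw [Finset.mem_range] at ht
    rw [card_mkU_inter_range h]
    set c := ((Finset.range n).filter (fun k => uF e k < t)).card with hc
    have hsub : Finset.range (min n ((t + 1) / 2)) ⊆
        (Finset.range n).filter (fun k => uF e k < t) := by
      intro k hk
      rw [Finset.mem_range] at hk
      have := h.uF_le k
      rw [Finset.mem_filter, Finset.mem_range]
      omega
    have := Finset.card_le_card hsub
    rw [Finset.card_range] at this
    omega

lemma peakSet_mkU {n : ℕ} {e : ℕ → ℕ} (h : GoodE n e) (hn : 1 ≤ n) :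
    peakSet n (mkU n e) =
      ((Finset.range n).filter (fun k => e (k + 1) ≤ e k)).image (uF e) := by
  ext i
  simp only [peakSet, Finset.mem_filter, Finset.mem_range, Finset.mem_image]
  constructor
  · rintro ⟨hi2n, hiU, hi1, hi1lt⟩
    rw [mem_mkU] at hiU
    obtain ⟨k, hk, rfl⟩ := hiU
    refine ⟨k, ⟨hk, ?_⟩, rfl⟩
    by_contra hcon
    push_neg at hcon
    have hk1n : k + 1 < n := by
      by_contra hge
      have := h.vanish (k + 1) (by omega)
      omega
    have hstep := h.step k
    have : e (k + 1) = e k + 1 := by omega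
    have hval : uF e (k + 1) = uF e k + 1 := by
      have h1 := h.e_le k
      simp only [uF]; omega
    exact hi1 (mem_mkU.mpr ⟨k + 1, hk1n, hval⟩)
  · rintro ⟨k, ⟨hk, hdesc⟩, rfl⟩
    have hle := h.uF_le k
    refine ⟨by omega, mem_mkU.mpr ⟨k, hk, rfl⟩, ?_, by omega⟩
    rw [mem_mkU]
    rintro ⟨j, hj, hval⟩
    rcases lt_trichotomy j (k + 1) with hlt | heq | hgt
    · have : uF e j ≤ uF e k := h.uF_mono.le_iff_le.mpr (by omega)
      omega
    · subst heq
      have h1 := h.e_le k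
      have h2 := h.e_le (k + 1)
      simp only [uF] at hval
      omega
    · have h1 : uF e (k + 1) ≤ uF e j := h.uF_mono.le_iff_le.mpr (by omega)
      have h2 := h.e_le k
      have h3 := h.e_le (k + 1)
      simp only [uF] at hval h1
      omega

lemma statDiff_mkU {n : ℕ} {e : ℕ → ℕ} (h : GoodE n e) (hn : 1 ≤ n) :
    statDiff n (mkU n e) = descSum n e := by
  have hinj : ∀ x ∈ (Finset.range n).filter (fun k => e (k + 1) ≤ e k),
      ∀ y ∈ (Finset.range n).filter (fun k => e (k + 1) ≤ e k), uF e x = uF e y → x = y :=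
    fun x _ y _ hxy => h.uF_mono.injective hxy
  have hph : ∀ k ∈ (Finset.range n).filter (fun k => e (k + 1) ≤ e k),
      peakHeight (mkU n e) (uF e k) = e k + 1 := by
    intro k hk
    rw [Finset.mem_filter, Finset.mem_range] at hk
    rw [peakHeight, card_mkU_inter_range h]
    have : (Finset.range n).filter (fun j => uF e j < uF e k + 1) = Finset.range (k + 1) := by
      ext j
      simp only [Finset.mem_filter, Finset.mem_range]
      constructor
      · rintro ⟨hj, hjk⟩
        by_contra hcon
        have : uF e (k+1) ≤ uF e j := h.uF_mono.le_iff_le.mpr (by omega)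
        have := h.uF_step k
        omega
      · intro hj
        have : uF e j ≤ uF e k := h.uF_mono.le_iff_le.mpr (by omega)
        exact ⟨by omega, by omega⟩
    rw [this, Finset.card_range]
    have h1 := h.e_le k
    have h2 := h.uF_le k
    simp only [uF]
    omega
  rw [statDiff, peakSet_mkU h hn, Finset.sum_image hinj,
    Finset.card_image_of_injOn (h.uF_mono.injective.injOn),
    Finset.sum_congr rfl hph, Finset.sum_add_distrib, Finset.sum_const, smul_eq_mul, mul_one]
  simp [descSum]

lemma exists_goodE {n : ℕ} (hn : 1 ≤ n) {U : Finset ℕ} (hU : U ∈ dyckPaths n) :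
    ∃ e : ℕ → ℕ, GoodE n e ∧ U = mkU n e := by
  simp only [dyckPaths, Finset.mem_filter, Finset.mem_powerset] at hU
  obtain ⟨hsub, hcard, hpre⟩ := hU
  set u := U.orderEmbOfFin hcard with hu
  set v : ℕ → ℕ := fun k => if h : k < n then (u ⟨k, h⟩ : ℕ) else 2 * n + k with hv
  have hvmem : ∀ k, k < n → v k ∈ U := by
    intro k hk
    simp only [hv, dif_pos hk]
    exact Finset.orderEmbOfFin_mem U hcard _
  have hvlt2n : ∀ k, k < n → v k < 2 * n := by
    intro k hk
    have := hsub (hvmem k hk)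
    rwa [Finset.mem_range] at this
  have hvmono : StrictMono v := by
    apply strictMono_nat_of_lt_succ
    intro k
    by_cases h1 : k + 1 < n
    · have h2 : k < n := by omega
      simp only [hv, dif_pos h1, dif_pos h2]
      have : (⟨k, h2⟩ : Fin n) < ⟨k + 1, h1⟩ := by simp [Fin.lt_def]
      exact_mod_cast u.lt_iff_lt.mpr this
    · by_cases h2 : k < n
      · simp only [hv, dif_pos h2, dif_neg h1]
        have := hvlt2n k h2
        simp only [hv, dif_pos h2] at this
        omega
      · simp only [hv, dif_neg h1, dif_neg h2]
        omega
  have hsurj : ∀ x ∈ U, ∃ k, k < n ∧ v k = x := by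
    intro x hx
    have : x ∈ Set.range (⇑u) := by
      rw [Finset.range_orderEmbOfFin]
      exact_mod_cast hx
    obtain ⟨j, hj⟩ := this
    exact ⟨j.1, j.2, by simp [hv, dif_pos j.2, hj]⟩
  have hrank : ∀ k, k < n → (U ∩ Finset.range (v k)).card = k := by
    intro k hk
    have heq : U ∩ Finset.range (v k) = (Finset.range k).image v := by
      ext x
      simp only [Finset.mem_inter, Finset.mem_range, Finset.mem_image]
      constructor
      · rintro ⟨hxU, hxlt⟩
        obtain ⟨j, hj, rfl⟩ := hsurj x hxU
        exact ⟨j, hvmono.lt_iff_lt.mp hxlt, rfl⟩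
      · rintro ⟨j, hj, rfl⟩
        exact ⟨hvmem j (by omega), hvmono hj⟩
    rw [heq, Finset.card_image_of_injOn hvmono.injective.injOn, Finset.card_range]
  have hvle : ∀ k, k < n → v k ≤ 2 * k := by
    intro k hk
    have h1 := hpre (v k) (by rw [Finset.mem_range]; have := hvlt2n k hk; omega)
    rw [hrank k hk] at h1
    omega
  refine ⟨fun k => if k < n then 2 * k - v k else 0, ⟨?_, ?_, ?_⟩, ?_⟩
  · show (if 0 < n then 2 * 0 - v 0 else 0) = 0
    rw [if_pos (by omega : 0 < n)]
    omega
  · intro k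
    by_cases h1 : k + 1 < n
    · have h2 : k < n := by omega
      simp only [if_pos h1, if_pos h2]
      have ha := hvmono (lt_add_one k)
      have hb := hvle k h2
      have hc := hvle (k + 1) h1
      omega
    · simp only [if_neg h1]
      omega
  · intro k hk
    simp [Nat.not_lt.mpr hk]
  · ext x
    rw [mem_mkU]
    have huf : ∀ k, k < n → uF (fun k => if k < n then 2 * k - v k else 0) k = v k := by
      intro k hk
      have := hvle k hk
      simp only [uF, if_pos hk]
      omega
    constructor
    · intro hx
      obtain ⟨k, hk, hvk⟩ := hsurj x hx
      exact ⟨k, hk, by rw [huf k hk, hvk]⟩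
    · rintro ⟨k, hk, rfl⟩
      rw [huf k hk]
      exact hvmem k hk

lemma goodE_unique {n : ℕ} {e e' : ℕ → ℕ} (h : GoodE n e) (h' : GoodE n e')
    (heq : mkU n e = mkU n e') : ∀ k, e k = e' k := by
  have key : ∀ k, k < n → uF e k = uF e' k := by
    intro k
    induction k using Nat.strong_induction_on with
    | _ k ih =>
      intro hk
      have h1 : uF e k ∈ mkU n e' := heq ▸ mem_mkU.mpr ⟨k, hk, rfl⟩
      have h2 : uF e' k ∈ mkU n e := heq.symm ▸ mem_mkU.mpr ⟨k, hk, rfl⟩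
      obtain ⟨j, hj, hje⟩ := mem_mkU.mp h1
      obtain ⟨i, hi, hie⟩ := mem_mkU.mp h2
      rcases lt_or_ge j k with hlt | hge
      · have hji := ih j hlt (by omega)
        have hjk : uF e j = uF e k := by rw [hji, hje]
        exact absurd (h.uF_mono.injective hjk) (by omega)
      · rcases lt_or_ge i k with hlt' | hge'
        · have hii := ih i hlt' (by omega)
          have hik : uF e' i = uF e' k := by rw [← hii, hie]
          exact absurd (h'.uF_mono.injective hik) (by omega)
        · have ha : uF e' k ≤ uF e' j := h'.uF_mono.le_iff_le.mpr hge
          have hb : uF e k ≤ uF e i := h.uF_mono.le_iff_le.mpr hge'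
          omega
  intro k
  by_cases hk : k < n
  · have := key k hk
    have h1 := h.e_le k
    have h2 := h'.e_le k
    simp only [uF] at this
    omega
  · rw [h.vanish k (by omega), h'.vanish k (by omega)]

/-- parameter set: pairs (p,q) with 1 ≤ p,q ≤ n-1 and (p < q or p = q+1) -/
def ParamS (n : ℕ) : Finset (ℕ × ℕ) :=
  ((Finset.Icc 1 (n - 1)) ×ˢ (Finset.Icc 1 (n - 1))).filter
    (fun x => x.1 < x.2 ∨ x.1 = x.2 + 1)

lemma mem_ParamS {n : ℕ} {pq : ℕ × ℕ} :
    pq ∈ ParamS n ↔ (1 ≤ pq.1 ∧ pq.1 ≤ n - 1 ∧ 1 ≤ pq.2 ∧ pq.2 ≤ n - 1 ∧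
      (pq.1 < pq.2 ∨ pq.1 = pq.2 + 1)) := by
  simp only [ParamS, Finset.mem_filter, Finset.mem_product, Finset.mem_Icc]
  tauto

def eFun (pq : ℕ × ℕ) : ℕ → ℕ := fun k =>
  if pq.1 < pq.2 then (if k = pq.1 ∨ k = pq.2 then 1 else 0)
  else (if k = pq.1 then 2 else if k + 1 = pq.1 then 1 else 0)

lemma goodE_eFun {n : ℕ} (hn : 2 ≤ n) {pq : ℕ × ℕ} (hpq : pq ∈ ParamS n) :
    GoodE n (eFun pq) := by
  obtain ⟨p, q⟩ := pq
  rw [mem_ParamS] at hpq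
  obtain ⟨hp1, hp2, hq1, hq2, hor⟩ := hpq
  rcases hor with hlt | hadj
  · constructor
    · simp only [eFun, if_pos hlt]
      have : ¬(0 = p ∨ 0 = q) := by omega
      simp [this]
    · intro k
      simp only [eFun, if_pos hlt]
      split <;> split <;> omega
    · intro k hk
      simp only [eFun, if_pos hlt]
      have : ¬(k = p ∨ k = q) := by omega
      simp [this]
  · have hnlt : ¬ (p < q) := by omega
    constructor
    · simp only [eFun, if_neg hnlt]
      have h1 : ¬ (0 = p) := by omega
      have h2 : ¬ (0 + 1 = p) := by omega
      simp [h1, h2]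
    · intro k
      simp only [eFun, if_neg hnlt]
      split_ifs <;> omega
    · intro k hk
      simp only [eFun, if_neg hnlt]
      have h1 : ¬ (k = p) := by omega
      have h2 : ¬ (k + 1 = p) := by omega
      simp [h1, h2]

lemma descSum_eFun {n : ℕ} (hn : 2 ≤ n) {pq : ℕ × ℕ} (hpq : pq ∈ ParamS n) :
    descSum n (eFun pq) = 2 := by
  obtain ⟨p, q⟩ := pq
  rw [mem_ParamS] at hpq
  obtain ⟨hp1, hp2, hq1, hq2, hor⟩ := hpq
  rw [descSum, Finset.sum_filter]
  rcases hor with hlt | hadj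
  · have hsupp : ∀ x ∈ Finset.range n, x ∉ ({p, q} : Finset ℕ) →
        (if eFun (p, q) (x + 1) ≤ eFun (p, q) x then eFun (p, q) x else 0) = 0 := by
      intro x _ hx
      simp only [Finset.mem_insert, Finset.mem_singleton] at hx
      push_neg at hx
      have : eFun (p, q) x = 0 := by
        simp only [eFun, if_pos hlt]
        have : ¬ (x = p ∨ x = q) := by omega
        simp [this]
      simp [this]
    rw [← Finset.sum_subset (by
      intro x hx
      simp only [Finset.mem_insert, Finset.mem_singleton] at hx
      rw [Finset.mem_range]
      omega) hsupp]
    rw [Finset.sum_pair (by omega : p ≠ q)]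
    have he_p : eFun (p, q) p = 1 := by simp [eFun, if_pos hlt]
    have he_q : eFun (p, q) q = 1 := by simp [eFun, if_pos hlt]
    have he_p1 : eFun (p, q) (p + 1) ≤ 1 := by
      simp only [eFun, if_pos hlt]; split <;> omega
    have he_q1 : eFun (p, q) (q + 1) = 0 := by
      simp only [eFun, if_pos hlt]
      rw [if_neg (by omega : ¬ (q + 1 = p ∨ q + 1 = q))]
    rw [if_pos (by omega), if_pos (by omega), he_p, he_q]
  · have hnlt : ¬ (p < q) := by omega
    have hsupp : ∀ x ∈ Finset.range n, x ∉ ({p - 1, p} : Finset ℕ) →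
        (if eFun (p, q) (x + 1) ≤ eFun (p, q) x then eFun (p, q) x else 0) = 0 := by
      intro x _ hx
      simp only [Finset.mem_insert, Finset.mem_singleton] at hx
      push_neg at hx
      have : eFun (p, q) x = 0 := by
        simp only [eFun, if_neg hnlt]
        have h1 : ¬ (x = p) := by omega
        have h2 : ¬ (x + 1 = p) := by omega
        simp [h1, h2]
      simp [this]
    rw [← Finset.sum_subset (by
      intro x hx
      simp only [Finset.mem_insert, Finset.mem_singleton] at hx
      rw [Finset.mem_range]
      omega) hsupp]
    rw [Finset.sum_pair (by omega : p - 1 ≠ p)]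
    have he_pm : eFun (p, q) (p - 1) = 1 := by
      simp only [eFun, if_neg hnlt]
      rw [if_neg (by omega), if_pos (by omega)]
    have he_p : eFun (p, q) p = 2 := by simp [eFun, if_neg hnlt]
    have he_p1 : eFun (p, q) (p + 1) = 0 := by
      simp only [eFun, if_neg hnlt]
      rw [if_neg (by omega), if_neg (by omega)]
    have hpm1 : p - 1 + 1 = p := by omega
    rw [hpm1, he_pm, he_p, he_p1]
    rw [if_neg (by omega), if_pos (by omega)]

lemma classify {n : ℕ} (hn : 2 ≤ n) {e : ℕ → ℕ} (h : GoodE n e)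
    (hsum : descSum n e = 2) :
    ∃ pq ∈ ParamS n, ∀ k, e k = eFun pq k := by
  set D := (Finset.range n).filter (fun k => e (k + 1) ≤ e k) with hD
  have climb : ∀ m k, n - k ≤ m → 1 ≤ e k → ∃ j, k ≤ j ∧ j ∈ D ∧ e j = e k + (j - k) := by
    intro m
    induction m with
    | zero =>
      intro k hm hk
      have := h.vanish k (by omega)
      omega
    | succ m ih =>
      intro k hm hk
      have hkn : k < n := by
        by_contra hc
        have := h.vanish k (by omega)
        omega
      by_cases hd : e (k + 1) ≤ e k
      · refine ⟨k, le_refl k, ?_, by omega⟩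
        rw [hD]
        exact Finset.mem_filter.mpr ⟨Finset.mem_range.mpr hkn, hd⟩
      · have hstep := h.step k
        obtain ⟨j, hj1, hj2, hj3⟩ := ih (k + 1) (by omega) (by omega)
        exact ⟨j, by omega, hj2, by omega⟩
  have hkey : ∀ k, 1 ≤ e k → ∃ j, j ∈ D.filter (fun k => e k ≠ 0) ∧ k ≤ j ∧
      e j = e k + (j - k) := by
    intro k hk
    obtain ⟨j, hj1, hj2, hj3⟩ := climb (n - k) k (le_refl _) hk
    exact ⟨j, Finset.mem_filter.mpr ⟨hj2, by omega⟩, hj1, hj3⟩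
  have hDsum : ∑ k ∈ D, e k = 2 := hsum
  have hDle : ∀ j ∈ D, e j ≤ 2 := fun j hj => by
    have := Finset.single_le_sum (f := e) (fun i _ => Nat.zero_le _) hj
    omega
  set D' := D.filter (fun k => e k ≠ 0) with hD'
  have hD'sum : ∑ k ∈ D', e k = 2 := by
    rw [hD', Finset.sum_filter_ne_zero]
    exact hDsum
  by_cases h2 : ∃ p ∈ D', e p = 2
  · obtain ⟨p, hpD', hp2⟩ := h2
    have hsingle : ∀ q ∈ D', q = p := by
      intro q hq
      by_contra hne
      have hsub : ({p, q} : Finset ℕ) ⊆ D' := by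
        intro x hx
        simp only [Finset.mem_insert, Finset.mem_singleton] at hx
        rcases hx with rfl | rfl
        · exact hpD'
        · exact hq
      have hle := Finset.sum_le_sum_of_subset (f := e) hsub
      rw [Finset.sum_pair (fun hc => hne hc.symm)] at hle
      have hq1 : e q ≠ 0 := (Finset.mem_filter.mp hq).2
      omega
    have hpD : p ∈ D := (Finset.mem_filter.mp hpD').1
    have hpn : p < n := Finset.mem_range.mp (Finset.mem_filter.mp hpD).1
    have hzero : ∀ k, k ≠ p - 1 → k ≠ p → e k = 0 := by
      intro k hk1 hk2
      by_contra hne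
      obtain ⟨j, hjD', hjk, hje⟩ := hkey k (by omega)
      have hjp := hsingle j hjD'
      subst hjp
      omega
    have hp0 : 1 ≤ p := by
      by_contra hc
      have : p = 0 := by omega
      rw [this] at hp2
      rw [h.zero] at hp2
      omega
    have hpm1 : e (p - 1) = 1 := by
      have hs := h.step (p - 1)
      have hp1' : p - 1 + 1 = p := by omega
      rw [hp1'] at hs
      have hge : 1 ≤ e (p - 1) := by omega
      obtain ⟨j, hjD', hjk, hje⟩ := hkey (p - 1) hge
      have hjp := hsingle j hjD'
      subst hjp
      omega
    have hp2' : 2 ≤ p := by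
      by_contra hc
      have : p = 1 := by omega
      rw [this] at hpm1
      simp at hpm1
      rw [h.zero] at hpm1
      omega
    refine ⟨(p, p - 1), ?_, ?_⟩
    · rw [mem_ParamS]
      refine ⟨by omega, by omega, by omega, by omega, Or.inr (by omega)⟩
    · intro k
      simp only [eFun]
      rw [if_neg (by omega : ¬ ((p, p-1).1 < (p, p-1).2))]
      by_cases hk : k = p
      · subst hk
        rw [if_pos rfl]
        exact hp2
      · rw [if_neg hk]
        by_cases hk2 : k + 1 = p
        · rw [if_pos hk2]
          have : k = p - 1 := by omega
          rw [this]
          exact hpm1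
        · rw [if_neg hk2]
          exact hzero k (by omega) hk
  · push_neg at h2
    have hall1 : ∀ j ∈ D', e j = 1 := by
      intro j hj
      have h1 : e j ≠ 0 := (Finset.mem_filter.mp hj).2
      have h2' := h2 j hj
      have h3 := hDle j (Finset.mem_filter.mp hj).1
      omega
    have hcard : D'.card = 2 := by
      have : ∑ k ∈ D', e k = D'.card := by
        rw [Finset.sum_congr rfl hall1]
        simp
      omega
    obtain ⟨x, y, hne, hPQ⟩ := Finset.card_eq_two.mp hcard
    obtain ⟨p, q, hpq, hPQ'⟩ : ∃ p q, p < q ∧ D' = {p, q} := by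
      rcases lt_or_gt_of_ne hne with hlt | hgt
      · exact ⟨x, y, hlt, hPQ⟩
      · exact ⟨y, x, hgt, by rw [hPQ, Finset.pair_comm]⟩
    have hpD' : p ∈ D' := by rw [hPQ']; simp
    have hqD' : q ∈ D' := by rw [hPQ']; simp
    have hep : e p = 1 := hall1 p hpD'
    have heq : e q = 1 := hall1 q hqD'
    have hzero : ∀ k, k ≠ p → k ≠ q → e k = 0 := by
      intro k hk1 hk2
      by_contra hne'
      obtain ⟨j, hjD', hjk, hje⟩ := hkey k (by omega)
      have : j = p ∨ j = q := by
        have := hjD'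
        rw [hPQ'] at this
        simpa using this
      have hej : e j = 1 := hall1 j hjD'
      rcases this with rfl | rfl <;> omega
    have hp1 : 1 ≤ p := by
      by_contra hc
      have : p = 0 := by omega
      rw [this, h.zero] at hep
      omega
    have hqn : q < n :=
      Finset.mem_range.mp (Finset.mem_filter.mp ((Finset.mem_filter.mp hqD').1)).1
    refine ⟨(p, q), ?_, ?_⟩
    · rw [mem_ParamS]
      exact ⟨by omega, by omega, by omega, by omega, Or.inl hpq⟩
    · intro k
      simp only [eFun]
      rw [if_pos (by simpa using hpq : (p, q).1 < (p, q).2)]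
      by_cases hk : k = p ∨ k = q
      · rw [if_pos hk]
        rcases hk with rfl | rfl
        · exact hep
        · exact heq
      · rw [if_neg hk]
        push_neg at hk
        exact hzero k hk.1 hk.2

lemma mkU_congr {n : ℕ} {e e' : ℕ → ℕ} (h : ∀ k, e k = e' k) : mkU n e = mkU n e' := by
  have : e = e' := funext h
  rw [this]

lemma path_filter_eq {n : ℕ} (hn : 2 ≤ n) :
    (dyckPaths n).filter (fun U => statDiff n U = 2) =
      (ParamS n).image (fun pq => mkU n (eFun pq)) := by
  ext U
  simp only [Finset.mem_filter, Finset.mem_image]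
  constructor
  · rintro ⟨hU, hstat⟩
    obtain ⟨e, he, rfl⟩ := exists_goodE (by omega) hU
    rw [statDiff_mkU he (by omega)] at hstat
    obtain ⟨pq, hpq, hfe⟩ := classify hn he hstat
    exact ⟨pq, hpq, (mkU_congr hfe).symm⟩
  · rintro ⟨pq, hpq, rfl⟩
    have hg := goodE_eFun hn hpq
    exact ⟨mkU_mem_dyckPaths hg,
      by rw [statDiff_mkU hg (by omega)]; exact descSum_eFun hn hpq⟩

lemma eFun_injOn {n : ℕ} (hn : 2 ≤ n) :
    Set.InjOn (fun pq => mkU n (eFun pq)) (ParamS n) := by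
  intro a ha b hb hab
  have ha' : a ∈ ParamS n := ha
  have hb' : b ∈ ParamS n := hb
  have hpt := goodE_unique (goodE_eFun hn ha') (goodE_eFun hn hb') hab
  clear hab ha hb
  obtain ⟨p, q⟩ := a
  obtain ⟨p', q'⟩ := b
  rw [mem_ParamS] at ha' hb'
  obtain ⟨hp1, hp2, hq1, hq2, hor⟩ := ha'
  obtain ⟨hp1', hp2', hq1', hq2', hor'⟩ := hb'
  simp only at hp1 hp2 hq1 hq2 hor hp1' hp2' hq1' hq2' hor'
  simp only [eFun] at hpt
  have hgoal : p = p' ∧ q = q' := by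
    rcases hor with hlt | hadj <;> rcases hor' with hlt' | hadj'
    · have key : ∀ k, (k = p ∨ k = q) ↔ (k = p' ∨ k = q') := by
        intro k
        have hk := hpt k
        rw [if_pos hlt, if_pos hlt'] at hk
        constructor
        · intro h1
          rw [if_pos h1] at hk
          by_contra hc
          rw [if_neg hc] at hk
          omega
        · intro h1
          rw [if_pos h1] at hk
          by_contra hc
          rw [if_neg hc] at hk
          omega
      have h1 := (key p).mp (Or.inl rfl)
      have h2 := (key q).mp (Or.inr rfl)
      have h3 := (key p').mpr (Or.inl rfl)
      rcases h1 with h1a | h1a <;> rcases h2 with h2a | h2a <;>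
        rcases h3 with h3a | h3a <;> omega
    · exfalso
      have hk := hpt p'
      rw [if_pos hlt, if_neg (by omega : ¬ (p' < q')), if_pos rfl] at hk
      by_cases hc : p' = p ∨ p' = q
      · rw [if_pos hc] at hk
        omega
      · rw [if_neg hc] at hk
        omega
    · exfalso
      have hk := hpt p
      rw [if_neg (by omega : ¬ (p < q)), if_pos hlt', if_pos rfl] at hk
      by_cases hc : p = p' ∨ p = q'
      · rw [if_pos hc] at hk
        omega
      · rw [if_neg hc] at hk
        omega
    · have hk := hpt p
      rw [if_neg (by omega : ¬ (p < q)), if_neg (by omega : ¬ (p' < q')), if_pos rfl] at hk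
      by_cases h1 : p = p'
      · omega
      · rw [if_neg h1] at hk
        by_cases h2 : p + 1 = p'
        · rw [if_pos h2] at hk
          omega
        · rw [if_neg h2] at hk
          omega
  obtain ⟨rfl, rfl⟩ := hgoal
  rfl

lemma T_eq_card_ParamS {n : ℕ} (hn : 2 ≤ n) : T n 2 = (ParamS n).card := by
  rw [T, path_filter_eq hn, Finset.card_image_of_injOn (eFun_injOn hn)]

def sact (i x : ℕ) : ℕ := if x + 1 = i then i else if x = i then i - 1 else x

lemma sact_lt {n i : ℕ} (hin : i + 1 ≤ n) {x : ℕ} (hx : x < n) : sact i x < n := by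
  simp only [sact]; split_ifs <;> omega

lemma sgen_apply {n : ℕ} {i : ℕ} (hi1 : 1 ≤ i) (hin : i + 1 ≤ n) {x : ℕ} (hx : x < n) :
    sgen n i ⟨x, hx⟩ = ⟨sact i x, sact_lt hin hx⟩ := by
  rw [sgen, dif_pos (by omega : 0 < i ∧ i < n)]
  rw [Equiv.swap_apply_def]
  split_ifs with h1 h2 <;>
    simp only [Fin.mk.injEq, Fin.ext_iff] at h1 ⊢ <;>
    simp only [sact] <;>
    first
      | (split_ifs <;> omega)
      | (simp only [Fin.ext_iff] at h2 ⊢; split_ifs <;> omega)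

lemma pair_apply {n p q : ℕ} (hp1 : 1 ≤ p) (hpn : p + 1 ≤ n) (hq1 : 1 ≤ q) (hqn : q + 1 ≤ n)
    {x : ℕ} (hx : x < n) :
    (sgen n p * sgen n q) ⟨x, hx⟩ = ⟨sact p (sact q x), sact_lt hpn (sact_lt hqn hx)⟩ := by
  rw [Equiv.Perm.mul_apply, sgen_apply hq1 hqn hx, sgen_apply hp1 hpn (sact_lt hqn hx)]

lemma sgen_sign {n i : ℕ} (hi1 : 1 ≤ i) (hin : i + 1 ≤ n) :
    Equiv.Perm.sign (sgen n i) = -1 := by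
  rw [sgen, dif_pos (by omega : 0 < i ∧ i < n)]
  exact Equiv.Perm.sign_swap (by simp [Fin.ext_iff]; omega)

lemma wprod_pair (n p q : ℕ) : wprod n [p, q] = sgen n p * sgen n q := by
  simp [wprod]

lemma wprod_nil (n : ℕ) : wprod n [] = 1 := by simp [wprod]

lemma wprod_single (n k : ℕ) : wprod n [k] = sgen n k := by simp [wprod]

section PairFacts

variable {n p q : ℕ}

/-- the permutation attached to a parameter pair -/
def permOf (n : ℕ) (pq : ℕ × ℕ) : Equiv.Perm (Fin n) := sgen n pq.1 * sgen n pq.2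

lemma permOf_ne_one (hn : 2 ≤ n) (h : (p, q) ∈ ParamS n) : permOf n (p, q) ≠ 1 := by
  rw [mem_ParamS] at h
  obtain ⟨hp1, hp2, hq1, hq2, hor⟩ := h
  simp only at hp1 hp2 hq1 hq2 hor
  intro hcon
  have key : ∀ x (hx : x < n), sact p (sact q x) = x := by
    intro x hx
    have := congrArg (fun w => w ⟨x, hx⟩) hcon
    simp only [Equiv.Perm.one_apply] at this
    rw [permOf, pair_apply (by omega) (by omega) (by omega) (by omega) hx] at this
    simpa [Fin.ext_iff] using this
  rcases hor with hlt | hadj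
  · have := key (p - 1) (by omega)
    simp only [sact] at this
    split_ifs at this <;> omega
  · have := key (q - 1) (by omega)
    simp only [sact] at this
    split_ifs at this <;> omega

lemma permOf_ne_sgen (hn : 2 ≤ n) (h : (p, q) ∈ ParamS n) (k : ℕ) (hk1 : 1 ≤ k)
    (hkn : k + 1 ≤ n) : permOf n (p, q) ≠ sgen n k := by
  rw [mem_ParamS] at h
  obtain ⟨hp1, hp2, hq1, hq2, hor⟩ := h
  simp only at hp1 hp2 hq1 hq2 hor
  intro hcon
  have hsign := congrArg Equiv.Perm.sign hcon
  rw [permOf, map_mul, sgen_sign hp1 (by omega), sgen_sign hq1 (by omega),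
    sgen_sign hk1 hkn] at hsign
  norm_num at hsign

lemma isReducedWord_permOf (hn : 2 ≤ n) (h : (p, q) ∈ ParamS n) :
    IsReducedWord n (permOf n (p, q)) [p, q] := by
  have h' := h
  rw [mem_ParamS] at h'
  obtain ⟨hp1, hp2, hq1, hq2, hor⟩ := h'
  simp only at hp1 hp2 hq1 hq2 hor
  refine ⟨?_, wprod_pair n p q, ?_⟩
  · intro i hi
    simp only [List.mem_cons, List.mem_singleton] at hi
    rcases hi with rfl | hi
    · omega
    · simp only [List.mem_singleton, List.not_mem_nil, or_false] at hi
      omega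
  · intro l' hval hprod
    match l' with
    | [] =>
      exfalso
      rw [wprod_nil] at hprod
      exact permOf_ne_one hn h hprod.symm
    | [k] =>
      exfalso
      rw [wprod_single] at hprod
      have := hval k (by simp)
      exact permOf_ne_sgen hn h k this.1 this.2 hprod.symm
    | a :: b :: t => simp

lemma fullyCommutative_permOf (hn : 2 ≤ n) (h : (p, q) ∈ ParamS n) :
    FullyCommutative n (permOf n (p, q)) := by
  intro l hl i i' _ hinf
  have hred := isReducedWord_permOf hn h
  have hle : l.length ≤ 2 := by
    have := hl.2.2 [p, q] hred.1 hred.2.1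
    simpa using this
  have := hinf.length_le
  simp at this
  omega

end PairFacts

lemma sact_fix {p q x : ℕ} (h1 : x + 1 ≠ p) (h2 : x ≠ p) (h3 : x + 1 ≠ q) (h4 : x ≠ q) :
    sact p (sact q x) = x := by
  simp only [sact]
  split_ifs <;> omega

lemma sact_A1 {p q : ℕ} (hp1 : 1 ≤ p) (hlt : p < q) : sact p (sact q (p - 1)) = p := by
  simp only [sact]; split_ifs <;> omega

lemma sact_A2 {p q : ℕ} (hp1 : 1 ≤ p) (hlt : p < q) : sact p (sact q q) ≠ q := by
  simp only [sact]; split_ifs <;> omega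

lemma sact_A3 {p q : ℕ} (hq1 : 1 ≤ q) (hadj : p = q + 1) :
    sact p (sact q (q - 1)) = q + 1 := by
  simp only [sact]; split_ifs <;> omega

lemma sact_A4 {p q : ℕ} (hq1 : 1 ≤ q) (hadj : p = q + 1) : sact p (sact q p) ≠ p := by
  simp only [sact]; split_ifs <;> omega

lemma permOf_injOn {n : ℕ} (hn : 2 ≤ n) : Set.InjOn (permOf n) (ParamS n) := by
  intro a ha b hb hab
  have ha' : a ∈ ParamS n := ha
  have hb' : b ∈ ParamS n := hb
  obtain ⟨p, q⟩ := a
  obtain ⟨p', q'⟩ := b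
  rw [mem_ParamS] at ha' hb'
  obtain ⟨hp1, hp2, hq1, hq2, hor⟩ := ha'
  obtain ⟨hp1', hp2', hq1', hq2', hor'⟩ := hb'
  simp only at hp1 hp2 hq1 hq2 hor hp1' hp2' hq1' hq2' hor'
  have key : ∀ x, x < n → sact p (sact q x) = sact p' (sact q' x) := by
    intro x hx
    have h0 : permOf n (p, q) ⟨x, hx⟩ = permOf n (p', q') ⟨x, hx⟩ := by rw [hab]
    rw [permOf, permOf,
      pair_apply (p := p) (q := q) (by omega) (by omega) (by omega) (by omega) hx,
      pair_apply (p := p') (q := q') (by omega) (by omega) (by omega) (by omega) hx] at h0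
    simpa [Fin.ext_iff] using h0
  have hgoal : p = p' ∧ q = q' := by
    rcases hor with hlt | hadj <;> rcases hor' with hlt' | hadj'
    · -- both ascending
      have hpp : p = p' := by
        by_contra hne
        rcases Nat.lt_or_ge p p' with hc | hc
        · have hk := key (p - 1) (by omega)
          rw [sact_A1 hp1 hlt, sact_fix (by omega) (by omega) (by omega) (by omega)] at hk
          omega
        · have hk := key (p' - 1) (by omega)
          rw [sact_fix (by omega) (by omega) (by omega) (by omega),
            sact_A1 hp1' hlt'] at hk
          omega
      subst hpp
      have hqq : q = q' := by
        by_contra hne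
        rcases Nat.lt_or_ge q q' with hc | hc
        · have hk := key q' (by omega)
          rw [sact_fix (by omega) (by omega) (by omega) (by omega)] at hk
          exact sact_A2 hp1' hlt' hk.symm
        · have hk := key q (by omega)
          rw [sact_fix (p := p) (q := q') (by omega) (by omega) (by omega) (by omega)] at hk
          exact sact_A2 hp1 hlt hk
      exact ⟨rfl, hqq⟩
    · -- ascending vs descending: contradiction
      exfalso
      have hmins : p = q' := by
        by_contra hne
        rcases Nat.lt_or_ge p q' with hc | hc
        · have hk := key (p - 1) (by omega)
          rw [sact_A1 hp1 hlt, sact_fix (by omega) (by omega) (by omega) (by omega)] at hk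
          omega
        · have hk := key (q' - 1) (by omega)
          rw [sact_fix (by omega) (by omega) (by omega) (by omega),
            sact_A3 hq1' hadj'] at hk
          omega
      have hmaxs : q = p' := by
        by_contra hne
        rcases Nat.lt_or_ge q p' with hc | hc
        · have hk := key p' (by omega)
          rw [sact_fix (by omega) (by omega) (by omega) (by omega)] at hk
          exact sact_A4 hq1' hadj' hk.symm
        · have hk := key q (by omega)
          rw [sact_fix (p := p') (q := q') (by omega) (by omega) (by omega) (by omega)] at hk
          exact sact_A2 hp1 hlt hk
      have hk := key (p - 1) (by omega)
      rw [sact_A1 hp1 hlt, show p - 1 = q' - 1 by omega, sact_A3 hq1' hadj'] at hk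
      omega
    · -- descending vs ascending: contradiction
      exfalso
      have hmins : q = p' := by
        by_contra hne
        rcases Nat.lt_or_ge q p' with hc | hc
        · have hk := key (q - 1) (by omega)
          rw [sact_A3 hq1 hadj, sact_fix (by omega) (by omega) (by omega) (by omega)] at hk
          omega
        · have hk := key (p' - 1) (by omega)
          rw [sact_fix (by omega) (by omega) (by omega) (by omega),
            sact_A1 hp1' hlt'] at hk
          omega
      have hmaxs : p = q' := by
        by_contra hne
        rcases Nat.lt_or_ge p q' with hc | hc
        · have hk := key q' (by omega)
          rw [sact_fix (by omega) (by omega) (by omega) (by omega)] at hk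
          exact sact_A2 hp1' hlt' hk.symm
        · have hk := key p (by omega)
          rw [sact_fix (p := p') (q := q') (by omega) (by omega) (by omega) (by omega)] at hk
          exact sact_A4 hq1 hadj hk
      have hk := key (q - 1) (by omega)
      rw [sact_A3 hq1 hadj, show q - 1 = p' - 1 by omega, sact_A1 hp1' hlt'] at hk
      omega
    · -- both descending
      have hqq : q = q' := by
        by_contra hne
        rcases Nat.lt_or_ge q q' with hc | hc
        · have hk := key (q - 1) (by omega)
          rw [sact_A3 hq1 hadj, sact_fix (by omega) (by omega) (by omega) (by omega)] at hk
          omega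
        · have hk := key (q' - 1) (by omega)
          rw [sact_fix (by omega) (by omega) (by omega) (by omega),
            sact_A3 hq1' hadj'] at hk
          omega
      exact ⟨by omega, hqq⟩
  obtain ⟨rfl, rfl⟩ := hgoal
  rfl

lemma sgen_comm {n a b : ℕ} (ha1 : 1 ≤ a) (han : a + 1 ≤ n) (hb1 : 1 ≤ b) (hbn : b + 1 ≤ n)
    (hgap : b + 2 ≤ a) : sgen n a * sgen n b = sgen n b * sgen n a := by
  apply Equiv.ext
  rintro ⟨x, hx⟩
  rw [pair_apply ha1 han hb1 hbn hx, pair_apply hb1 hbn ha1 han hx]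
  simp only [Fin.mk.injEq, sact]
  split_ifs <;> omega

lemma sgen_mul_self {n a : ℕ} (ha1 : 1 ≤ a) (han : a + 1 ≤ n) :
    sgen n a * sgen n a = 1 := by
  rw [sgen, dif_pos (by omega : 0 < a ∧ a < n)]
  exact Equiv.swap_mul_self _ _

lemma perm_pred_iff {n : ℕ} (hn : 2 ≤ n) (w : Equiv.Perm (Fin n)) :
    (FullyCommutative n w ∧ ∃ l : List ℕ, IsReducedWord n w l ∧ l.length = 2) ↔
      w ∈ (ParamS n).image (permOf n) := by
  constructor
  · rintro ⟨hfc, l, hred, hlen⟩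
    match l, hlen with
    | [a, b], _ =>
      obtain ⟨hval, hprod, hmin⟩ := hred
      have hva := hval a (by simp)
      have hvb := hval b (by simp)
      rw [wprod_pair] at hprod
      have hab : a ≠ b := by
        rintro rfl
        have h1 : wprod n [] = w := by
          rw [wprod_nil, ← hprod, sgen_mul_self hva.1 hva.2]
        have := hmin [] (by simp) h1
        simp at this
      rw [Finset.mem_image]
      rcases Nat.lt_or_ge a b with hlt | hge
      · refine ⟨(a, b), mem_ParamS.mpr ⟨hva.1, by omega, hvb.1, by omega, Or.inl hlt⟩, ?_⟩
        rw [permOf]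
        exact hprod
      · rcases Nat.eq_or_lt_of_le (show b ≤ a by omega) with heq | hlt'
        · omega
        · rcases Nat.eq_or_lt_of_le (show b + 1 ≤ a by omega) with hadj | hgap
          · refine ⟨(a, b), mem_ParamS.mpr
              ⟨hva.1, by omega, hvb.1, by omega, Or.inr (by omega)⟩, ?_⟩
            rw [permOf]
            exact hprod
          · refine ⟨(b, a), mem_ParamS.mpr ⟨hvb.1, by omega, hva.1, by omega, Or.inl hlt'⟩, ?_⟩
            rw [permOf]
            rw [← sgen_comm hva.1 hva.2 hvb.1 hvb.2 (by omega)]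
            exact hprod
  · rw [Finset.mem_image]
    rintro ⟨pq, hpq, rfl⟩
    obtain ⟨p, q⟩ := pq
    exact ⟨fullyCommutative_permOf hn hpq, [p, q],
      isReducedWord_permOf hn hpq, rfl⟩

lemma card_perm {n : ℕ} (hn : 2 ≤ n) :
    Nat.card {w : Equiv.Perm (Fin n) //
        FullyCommutative n w ∧ ∃ l : List ℕ, IsReducedWord n w l ∧ l.length = 2}
      = (ParamS n).card := by
  have h1 := Nat.card_congr (Equiv.subtypeEquivRight (fun w => perm_pred_iff hn w))
  rw [h1, Nat.card_eq_finsetCard, Finset.card_image_of_injOn (permOf_injOn hn)]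

lemma ParamS_four : (ParamS 4).card = 5 := by
  have h : ParamS 4 = {(1, 2), (1, 3), (2, 3), (2, 1), (3, 2)} := by
    ext ⟨x, y⟩
    simp only [mem_ParamS, Finset.mem_insert, Finset.mem_singleton, Prod.mk.injEq]
    omega
  rw [h]
  rfl

/-- For `n ≥ 2`, the number of Dyck paths of semi-length `n` with
(sum of peak heights) − (number of peaks) `= 2` equals the number of fully commutative
elements of Coxeter length `2` in `S_n`; and `T 4 2 = 5`. -/
theorem T_two_eq_card_fullyCommutative (n : ℕ) (hn : 2 ≤ n) :
    T n 2 = Nat.card {w : Equiv.Perm (Fin n) //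
        FullyCommutative n w ∧ ∃ l : List ℕ, IsReducedWord n w l ∧ l.length = 2} ∧
    T 4 2 = 5 := by
  constructor
  · rw [T_eq_card_ParamS hn, card_perm hn]
  · rw [T_eq_card_ParamS (by norm_num : (2:ℕ) ≤ 4), ParamS_four]
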